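/- The function φ₁ is locally Lipschitz continuous on [0,∞); moreover φ₁(x) ≤ φ(x) for all x ≥ 0, φ₁(x) > 0 for all x > 0, φ₁(0) = 0, and φ₁(x) → +∞ as x → ∞. -/

import Mathlib

open Filter MeasureTheory

/-- `φ(x) = inf_{‖y‖=x} ⟨y, f(y)⟩/‖y‖` for `x > 0`, and `φ(0) = 0`. -/
noncomputable def phi {d : ℕ} (f : EuclideanSpace ℝ (Fin d) → EuclideanSpace ℝ (Fin d))
    (x : ℝ) : ℝ :=
  if x = 0 then 0
  else sInf ((fun y : EuclideanSpace ℝ (Fin d) => (inner ℝ y (f y) : ℝ) / ‖y‖) '' {y | ‖y‖ = x})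

/-- `φ₀(x) = inf_{x/2 ≤ y ≤ 4x} φ(y)`. -/
noncomputable def phi0 {d : ℕ} (f : EuclideanSpace ℝ (Fin d) → EuclideanSpace ℝ (Fin d))
    (x : ℝ) : ℝ :=
  sInf (phi f '' Set.Icc (x / 2) (4 * x))

/-- `φ₁(x) = (1/x) ∫_x^{2x} min(v,1) φ₀(v) dv` for `x > 0`, and `φ₁(0) = 0`. -/
noncomputable def phi1 {d : ℕ} (f : EuclideanSpace ℝ (Fin d) → EuclideanSpace ℝ (Fin d))
    (x : ℝ) : ℝ :=
  if x = 0 then 0 else (1 / x) * ∫ v in x..(2 * x), min v 1 * phi0 f v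

section aux
variable {d : ℕ} {f : EuclideanSpace ℝ (Fin d) → EuclideanSpace ℝ (Fin d)}

lemma phiset_nonneg (hdiss : ∀ x : EuclideanSpace ℝ (Fin d), x ≠ 0 → 0 < (inner ℝ x (f x) : ℝ))
    {x : ℝ} (hx : x ≠ 0) :
    ∀ a ∈ ((fun y : EuclideanSpace ℝ (Fin d) => (inner ℝ y (f y) : ℝ) / ‖y‖) '' {y | ‖y‖ = x}),
      0 ≤ a := by
  rintro a ⟨y, hy, rfl⟩
  have hy0 : y ≠ 0 := by
    intro h
    subst h
    simp only [Set.mem_setOf_eq, norm_zero] at hy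
    exact hx hy.symm
  exact div_nonneg (hdiss y hy0).le (norm_nonneg y)

lemma phi_nonneg (hdiss : ∀ x : EuclideanSpace ℝ (Fin d), x ≠ 0 → 0 < (inner ℝ x (f x) : ℝ))
    (x : ℝ) : 0 ≤ phi f x := by
  unfold phi
  split
  · exact le_refl 0
  · exact Real.sInf_nonneg (phiset_nonneg hdiss (by assumption))

lemma phi_le_apply (hdiss : ∀ x : EuclideanSpace ℝ (Fin d), x ≠ 0 → 0 < (inner ℝ x (f x) : ℝ))
    {x : ℝ} (hx : 0 < x) {y : EuclideanSpace ℝ (Fin d)} (hy : ‖y‖ = x) :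
    phi f x ≤ ‖f y‖ := by
  have hyn : (0:ℝ) < ‖y‖ := hy ▸ hx
  have h1 : phi f x ≤ (inner ℝ y (f y) : ℝ) / ‖y‖ := by
    rw [phi, if_neg hx.ne']
    exact csInf_le ⟨0, fun a ha => phiset_nonneg hdiss hx.ne' a ha⟩ ⟨y, hy, rfl⟩
  refine h1.trans ?_
  rw [div_le_iff₀ hyn]
  calc (inner ℝ y (f y) : ℝ) ≤ ‖y‖ * ‖f y‖ := real_inner_le_norm y (f y)
    _ = ‖f y‖ * ‖y‖ := mul_comm _ _


/-- Continuous surrogate for `phi` on `(0,∞)`. -/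
noncomputable def PhiC {d : ℕ} (f : EuclideanSpace ℝ (Fin d) → EuclideanSpace ℝ (Fin d))
    (x : ℝ) : ℝ :=
  sInf ((fun u : EuclideanSpace ℝ (Fin d) => (inner ℝ u (f (x • u)) : ℝ)) ''
    Metric.sphere (0 : EuclideanSpace ℝ (Fin d)) 1)

lemma PhiC_continuous (hf : Continuous f) : Continuous (PhiC f) := by
  apply IsCompact.continuous_sInf (isCompact_sphere (0 : EuclideanSpace ℝ (Fin d)) 1)
  exact Continuous.inner continuous_snd (hf.comp (continuous_fst.smul continuous_snd))

lemma phi_eq_PhiC {x : ℝ} (hx : 0 < x) : phi f x = PhiC f x := by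
  rw [phi, if_neg hx.ne', PhiC]
  congr 1
  ext a
  constructor
  · rintro ⟨y, hy, rfl⟩
    have hy' : ‖y‖ = x := hy
    have hyn : (0:ℝ) < ‖y‖ := hy' ▸ hx
    refine ⟨x⁻¹ • y, ?_, ?_⟩
    · rw [mem_sphere_zero_iff_norm, norm_smul, hy', norm_inv, Real.norm_eq_abs,
        abs_of_pos hx, inv_mul_cancel₀ hx.ne']
    · have hxy : x • x⁻¹ • y = y := smul_inv_smul₀ hx.ne' y
      show (inner ℝ (x⁻¹ • y) (f (x • x⁻¹ • y)) : ℝ) = (inner ℝ y (f y) : ℝ) / ‖y‖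
      rw [hxy, real_inner_smul_left, hy', inv_mul_eq_div]
  · rintro ⟨u, hu, rfl⟩
    have hu' : ‖u‖ = 1 := mem_sphere_zero_iff_norm.mp hu
    refine ⟨x • u, ?_, ?_⟩
    · show ‖x • u‖ = x
      rw [norm_smul, hu', Real.norm_eq_abs, abs_of_pos hx, mul_one]
    · have : ‖x • u‖ = x := by
        rw [norm_smul, hu', Real.norm_eq_abs, abs_of_pos hx, mul_one]
      show (inner ℝ (x • u) (f (x • u)) : ℝ) / ‖x • u‖ = (inner ℝ u (f (x • u)) : ℝ)
      rw [this, real_inner_smul_left, mul_div_cancel_left₀ _ hx.ne']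

lemma phi_continuousOn (hf : Continuous f) : ContinuousOn (phi f) (Set.Ioi 0) :=
  ((PhiC_continuous hf).continuousOn).congr fun _ hx => phi_eq_PhiC hx

lemma phi_pos (hd : 1 ≤ d) (hf : Continuous f)
    (hdiss : ∀ x : EuclideanSpace ℝ (Fin d), x ≠ 0 → 0 < (inner ℝ x (f x) : ℝ))
    {x : ℝ} (hx : 0 < x) : 0 < phi f x := by
  haveI : Nonempty (Fin d) := ⟨⟨0, hd⟩⟩
  have hset : {y : EuclideanSpace ℝ (Fin d) | ‖y‖ = x} = Metric.sphere 0 x := by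
    ext y; simp [mem_sphere_zero_iff_norm]
  have hg : ContinuousOn (fun y : EuclideanSpace ℝ (Fin d) => (inner ℝ y (f y) : ℝ) / ‖y‖)
      (Metric.sphere 0 x) := by
    apply ContinuousOn.div
    · exact (Continuous.inner continuous_id hf).continuousOn
    · exact continuous_norm.continuousOn
    · intro y hy
      have : ‖y‖ = x := mem_sphere_zero_iff_norm.mp hy
      rw [this]; exact hx.ne'
  have hcomp : IsCompact ((fun y : EuclideanSpace ℝ (Fin d) => (inner ℝ y (f y) : ℝ) / ‖y‖) ''
      Metric.sphere 0 x) := (isCompact_sphere 0 x).image_of_continuousOn hg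
  have hne : (Metric.sphere (0 : EuclideanSpace ℝ (Fin d)) x).Nonempty :=
    NormedSpace.sphere_nonempty.mpr hx.le
  rw [phi, if_neg hx.ne', hset]
  obtain ⟨y, hy, hval⟩ := hcomp.sInf_mem (hne.image _)
  rw [← hval]
  have hy0 : y ≠ 0 := by
    intro h
    rw [h] at hy
    have := mem_sphere_zero_iff_norm.mp hy
    rw [norm_zero] at this
    exact hx.ne this
  exact div_pos (hdiss y hy0) (norm_pos_iff.mpr hy0)


lemma phi0_nonneg (hdiss : ∀ x : EuclideanSpace ℝ (Fin d), x ≠ 0 → 0 < (inner ℝ x (f x) : ℝ))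
    (x : ℝ) : 0 ≤ phi0 f x := by
  apply Real.sInf_nonneg
  rintro a ⟨y, _, rfl⟩
  exact phi_nonneg hdiss y

lemma phi0_le_phi (hdiss : ∀ x : EuclideanSpace ℝ (Fin d), x ≠ 0 → 0 < (inner ℝ x (f x) : ℝ))
    {x : ℝ} (hx : 0 ≤ x) : phi0 f x ≤ phi f x := by
  apply csInf_le ⟨0, by rintro a ⟨y, -, rfl⟩; exact phi_nonneg hdiss y⟩
  exact ⟨x, ⟨by linarith, by linarith⟩, rfl⟩

lemma phi0_le_of_mem (hdiss : ∀ x : EuclideanSpace ℝ (Fin d), x ≠ 0 → 0 < (inner ℝ x (f x) : ℝ))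
    {x y : ℝ} (h1 : x / 2 ≤ y) (h2 : y ≤ 4 * x) : phi0 f x ≤ phi f y := by
  apply csInf_le ⟨0, by rintro a ⟨z, -, rfl⟩; exact phi_nonneg hdiss z⟩
  exact ⟨y, ⟨h1, h2⟩, rfl⟩

lemma phi0_pos (hd : 1 ≤ d) (hf : Continuous f)
    (hdiss : ∀ x : EuclideanSpace ℝ (Fin d), x ≠ 0 → 0 < (inner ℝ x (f x) : ℝ))
    {x : ℝ} (hx : 0 < x) : 0 < phi0 f x := by
  have hsub : Set.Icc (x / 2) (4 * x) ⊆ Set.Ioi 0 := fun y hy => lt_of_lt_of_le (by linarith) hy.1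
  have hcont : ContinuousOn (phi f) (Set.Icc (x / 2) (4 * x)) :=
    (phi_continuousOn hf).mono hsub
  have hcomp : IsCompact (phi f '' Set.Icc (x / 2) (4 * x)) :=
    isCompact_Icc.image_of_continuousOn hcont
  have hne : (Set.Icc (x / 2) (4 * x)).Nonempty := ⟨x, by constructor <;> linarith⟩
  obtain ⟨y, hy, hval⟩ := hcomp.sInf_mem (hne.image _)
  rw [phi0, ← hval]
  exact phi_pos hd hf hdiss (hsub hy)

/-- Continuous surrogate for `phi0` on `(0,∞)`. -/
noncomputable def Phi0C {d : ℕ} (f : EuclideanSpace ℝ (Fin d) → EuclideanSpace ℝ (Fin d))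
    (x : ℝ) : ℝ :=
  sInf ((fun t : ℝ => PhiC f (t * x)) '' Set.Icc (1/2 : ℝ) 4)

lemma Phi0C_continuous (hf : Continuous f) : Continuous (Phi0C f) := by
  apply IsCompact.continuous_sInf (isCompact_Icc (a := (1/2:ℝ)) (b := 4))
  exact (PhiC_continuous hf).comp (continuous_snd.mul continuous_fst)

lemma phi0_eq_Phi0C (hf : Continuous f) {x : ℝ} (hx : 0 < x) : phi0 f x = Phi0C f x := by
  rw [phi0, Phi0C]
  have himg : (fun t : ℝ => t * x) '' Set.Icc (1/2 : ℝ) 4 = Set.Icc (x / 2) (4 * x) := by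
    rw [Set.image_mul_right_Icc (by norm_num) hx.le]
    congr 1
    ring_nf
  have : (fun t : ℝ => PhiC f (t * x)) '' Set.Icc (1/2 : ℝ) 4
      = PhiC f '' Set.Icc (x / 2) (4 * x) := by
    rw [← himg, Set.image_image]
  rw [this]
  congr 1
  apply Set.image_congr
  intro y hy
  exact phi_eq_PhiC (lt_of_lt_of_le (by linarith) hy.1)

lemma phi0_continuousOn (hf : Continuous f) : ContinuousOn (phi0 f) (Set.Ioi 0) :=
  ((Phi0C_continuous hf).continuousOn).congr fun _ hx => phi0_eq_Phi0C hf hx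

end aux

set_option maxHeartbeats 1000000 in
theorem stmt_1 (d : ℕ) (hd : 1 ≤ d)
    (f : EuclideanSpace ℝ (Fin d) → EuclideanSpace ℝ (Fin d)) (hf : Continuous f)
    (hf0 : f 0 = 0)
    (hdiss : ∀ x : EuclideanSpace ℝ (Fin d), x ≠ 0 → 0 < (inner ℝ x (f x) : ℝ))
    (hliminf : Tendsto (phi f) atTop atTop) :
    (∀ b : ℝ, 0 ≤ b → ∃ K : NNReal, LipschitzOnWith K (phi1 f) (Set.Icc 0 b)) ∧
    (∀ x : ℝ, 0 ≤ x → phi1 f x ≤ phi f x) ∧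
    (∀ x : ℝ, 0 < x → 0 < phi1 f x) ∧
    phi1 f 0 = 0 ∧
    Tendsto (phi1 f) atTop atTop := by
  haveI : Nonempty (Fin d) := ⟨⟨0, hd⟩⟩
  set ψ : ℝ → ℝ := fun v => min v 1 * phi0 f v with hψdef
  have hψcont : ContinuousOn ψ (Set.Ioi 0) :=
    ((continuous_id.min continuous_const).continuousOn).mul (phi0_continuousOn hf)
  have hψnn : ∀ v : ℝ, 0 < v → 0 ≤ ψ v := fun v hv =>
    mul_nonneg (le_min hv.le zero_le_one) (phi0_nonneg hdiss v)
  have hψint : ∀ a c : ℝ, 0 < a → a ≤ c → IntervalIntegrable ψ volume a c := by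
    intro a c ha hac
    apply (hψcont.mono ?_).intervalIntegrable
    rw [Set.uIcc_of_le hac]
    exact fun v hv => lt_of_lt_of_le ha hv.1
  have hintnn : ∀ a c : ℝ, 0 < a → a ≤ c → 0 ≤ ∫ v in a..c, ψ v := fun a c ha hac =>
    intervalIntegral.integral_nonneg hac (fun u hu => hψnn u (lt_of_lt_of_le ha hu.1))
  have hphi10 : phi1 f 0 = 0 := by rw [phi1, if_pos rfl]
  have hphi1eq : ∀ x : ℝ, x ≠ 0 → phi1 f x = (1/x) * ∫ v in x..(2*x), ψ v := fun x hx => by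
    rw [phi1, if_neg hx]
  have hphi1nn : ∀ x : ℝ, 0 < x → 0 ≤ phi1 f x := fun x hx => by
    rw [hphi1eq x hx.ne']
    exact mul_nonneg (by positivity) (hintnn x (2*x) hx (by linarith))
  have h_le : ∀ x : ℝ, 0 ≤ x → phi1 f x ≤ phi f x := by
    intro x hx
    rcases hx.eq_or_lt with h | hx0
    · rw [← h]; simp [phi1, phi]
    · rw [hphi1eq x hx0.ne']
      have hbound : ∀ v ∈ Set.Icc x (2*x), ψ v ≤ phi f x := by
        intro v hv
        calc ψ v ≤ 1 * phi0 f v :=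
              mul_le_mul_of_nonneg_right (min_le_right _ _) (phi0_nonneg hdiss v)
          _ = phi0 f v := one_mul _
          _ ≤ phi f x := phi0_le_of_mem hdiss (by linarith [hv.2]) (by linarith [hv.1])
      have hI : (∫ v in x..(2*x), ψ v) ≤ (2*x - x) * phi f x := by
        calc (∫ v in x..(2*x), ψ v) ≤ ∫ _v in x..(2*x), phi f x :=
              intervalIntegral.integral_mono_on (by linarith)
                (hψint x (2*x) hx0 (by linarith)) intervalIntegrable_const hbound
          _ = (2*x - x) * phi f x := by rw [intervalIntegral.integral_const, smul_eq_mul]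
      calc (1/x) * ∫ v in x..(2*x), ψ v ≤ (1/x) * ((2*x - x) * phi f x) :=
            mul_le_mul_of_nonneg_left hI (by positivity)
        _ = phi f x := by field_simp; ring
  have h_pos : ∀ x : ℝ, 0 < x → 0 < phi1 f x := by
    intro x hx
    rw [hphi1eq x hx.ne']
    apply mul_pos (by positivity)
    apply intervalIntegral.intervalIntegral_pos_of_pos_on
      (hψint x (2*x) hx (by linarith)) ?_ (by linarith)
    intro v hv
    have hv0 : 0 < v := hx.trans hv.1
    exact mul_pos (lt_min hv0 one_pos) (phi0_pos hd hf hdiss hv0)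
  have h_tendsto : Tendsto (phi1 f) atTop atTop := by
    rw [tendsto_atTop]
    intro C
    obtain ⟨R, hR⟩ := eventually_atTop.mp (tendsto_atTop.mp hliminf (max C 0))
    filter_upwards [eventually_ge_atTop (max 1 (2*R))] with x hx
    have hx1 : (1:ℝ) ≤ x := le_trans (le_max_left _ _) hx
    have hx0 : (0:ℝ) < x := lt_of_lt_of_le one_pos hx1
    have hxR : 2*R ≤ x := le_trans (le_max_right _ _) hx
    have hψge : ∀ v ∈ Set.Icc x (2*x), max C 0 ≤ ψ v := by
      intro v hv
      have hv0 : 0 < v := lt_of_lt_of_le hx0 hv.1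
      have h1v : (1:ℝ) ≤ v := hx1.trans hv.1
      have hphi0ge : max C 0 ≤ phi0 f v := by
        apply le_csInf (Set.Nonempty.image _ ⟨v, by constructor <;> linarith⟩)
        rintro a ⟨z, hz, rfl⟩
        apply hR
        have h1 : v/2 ≤ z := hz.1
        linarith [hv.1]
      calc max C 0 ≤ phi0 f v := hphi0ge
        _ = ψ v := by show _ = min v 1 * phi0 f v; rw [min_eq_right h1v, one_mul]
    rw [hphi1eq x hx0.ne']
    have hI : x * max C 0 ≤ ∫ v in x..(2*x), ψ v := by
      have h := intervalIntegral.integral_mono_on (show x ≤ 2*x by linarith)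
        intervalIntegrable_const (hψint x (2*x) hx0 (by linarith)) hψge
      rwa [intervalIntegral.integral_const, smul_eq_mul, show 2*x - x = x by ring] at h
    calc C ≤ max C 0 := le_max_left _ _
      _ = (1/x) * (x * max C 0) := by field_simp
      _ ≤ (1/x) * ∫ v in x..(2*x), ψ v := mul_le_mul_of_nonneg_left hI (by positivity)
  refine ⟨?_, h_le, h_pos, hphi10, h_tendsto⟩
  intro b hb
  obtain ⟨M₀, hM₀⟩ := (isCompact_closedBall (0 : EuclideanSpace ℝ (Fin d))
    (2*b)).exists_bound_of_continuousOn hf.continuousOn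
  set M : ℝ := max M₀ 0 with hMdef
  have hM : 0 ≤ M := le_max_right _ _
  have hsne : (Metric.sphere (0 : EuclideanSpace ℝ (Fin d)) 1).Nonempty :=
    NormedSpace.sphere_nonempty.mpr zero_le_one
  obtain ⟨e, he'⟩ := hsne
  have he : ‖e‖ = 1 := mem_sphere_zero_iff_norm.mp he'
  have hphiM : ∀ v : ℝ, 0 < v → v ≤ 2*b → phi f v ≤ M := by
    intro v hv hvb
    have hnorm : ‖v • e‖ = v := by rw [norm_smul, he, mul_one, Real.norm_eq_abs, abs_of_pos hv]
    calc phi f v ≤ ‖f (v • e)‖ := phi_le_apply hdiss hv hnorm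
      _ ≤ M₀ := hM₀ _ (by rw [Metric.mem_closedBall, dist_zero_right, hnorm]; exact hvb)
      _ ≤ M := le_max_left _ _
  have hψleM : ∀ v : ℝ, 0 < v → v ≤ 2*b → ψ v ≤ M * v := by
    intro v hv hvb
    calc ψ v ≤ v * M := mul_le_mul (min_le_left _ _)
          ((phi0_le_phi hdiss hv.le).trans (hphiM v hv hvb)) (phi0_nonneg hdiss v) hv.le
      _ = M * v := mul_comm _ _
  have hIle : ∀ a c : ℝ, 0 < a → a ≤ c → c ≤ 2*b → (∫ v in a..c, ψ v) ≤ M * c * (c - a) := by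
    intro a c ha hac hcb
    have h1 : (∫ v in a..c, ψ v) ≤ ∫ v in a..c, M * v :=
      intervalIntegral.integral_mono_on hac (hψint a c ha hac)
        ((continuous_const.mul continuous_id).intervalIntegrable a c)
        (fun v hv => hψleM v (lt_of_lt_of_le ha hv.1) (hv.2.trans hcb))
    have h2 : (∫ v in a..c, M * v) = M * ((c^2 - a^2)/2) := by
      rw [intervalIntegral.integral_const_mul, integral_id]
    nlinarith [mul_nonneg hM (sq_nonneg (c - a))]
  have hphi1le : ∀ x : ℝ, 0 < x → x ≤ b → phi1 f x ≤ 2 * M * x := by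
    intro x hx hxb
    rw [hphi1eq x hx.ne']
    have h := hIle x (2*x) hx (by linarith) (by linarith)
    calc (1/x) * ∫ v in x..(2*x), ψ v ≤ (1/x) * (M * (2*x) * (2*x - x)) :=
          mul_le_mul_of_nonneg_left h (by positivity)
      _ = 2 * M * x := by field_simp; ring
  have key : ∀ x y : ℝ, 0 ≤ x → x ≤ y → y ≤ b → |phi1 f y - phi1 f x| ≤ 16 * M * (y - x) := by
    intro x y hx hxy hyb
    rcases hx.eq_or_lt with h0 | hx0
    · rw [← h0] at hxy ⊢
      rw [hphi10, sub_zero]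
      rcases hxy.eq_or_lt with h | hy0
      · rw [← h, hphi10]; simp
      · rw [abs_of_nonneg (hphi1nn y hy0)]
        calc phi1 f y ≤ 2 * M * y := hphi1le y hy0 hyb
          _ ≤ 16 * M * (y - 0) := by nlinarith [mul_nonneg hM hy0.le]
    · have hy0 : 0 < y := hx0.trans_le hxy
      rcases le_or_gt y (2*x) with hcase | hcase
      · set A := ∫ v in x..(2*x), ψ v with hA
        set B := ∫ v in y..(2*y), ψ v with hB
        set C1 := ∫ v in (2*x)..(2*y), ψ v with hC1
        set C2 := ∫ v in x..y, ψ v with hC2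
        have hAnn : 0 ≤ A := hintnn _ _ hx0 (by linarith)
        have hAle : A ≤ M * (2*x) * (2*x - x) := hIle x (2*x) hx0 (by linarith) (by linarith)
        have hBnn : 0 ≤ B := hintnn _ _ hy0 (by linarith)
        have hC1nn : 0 ≤ C1 := hintnn _ _ (by linarith) (by linarith)
        have hC1le : C1 ≤ M * (2*y) * (2*y - 2*x) :=
          hIle (2*x) (2*y) (by linarith) (by linarith) (by linarith)
        have hC2nn : 0 ≤ C2 := hintnn _ _ hx0 hxy
        have hC2le : C2 ≤ M * y * (y - x) := hIle x y hx0 hxy (by linarith)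
        have hsum : B - A = C1 - C2 := by
          have h1 : A + C1 = ∫ v in x..(2*y), ψ v :=
            intervalIntegral.integral_add_adjacent_intervals
              (hψint x (2*x) hx0 (by linarith)) (hψint (2*x) (2*y) (by linarith) (by linarith))
          have h2 : C2 + B = ∫ v in x..(2*y), ψ v :=
            intervalIntegral.integral_add_adjacent_intervals
              (hψint x y hx0 hxy) (hψint y (2*y) hy0 (by linarith))
          linarith
        have hrw : phi1 f y - phi1 f x = (x * B - y * A) / (x * y) := by
          rw [hphi1eq x hx0.ne', hphi1eq y hy0.ne']
          field_simp
          rw [hA, hB, mul_comm y 2]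
          ring
        rw [hrw, abs_div, abs_of_pos (mul_pos hx0 hy0), div_le_iff₀ (mul_pos hx0 hy0)]
        have e1 : x * B - y * A = x * C1 - x * C2 - (y - x) * A := by
          linear_combination x * hsum
        have hMxy : 0 ≤ M * (y - x) * (x * y) :=
          mul_nonneg (mul_nonneg hM (by linarith)) (by positivity)
        have t1 : x * C1 ≤ 4 * (M * (y - x) * (x * y)) := by
          calc x * C1 ≤ x * (M * (2*y) * (2*y - 2*x)) :=
                mul_le_mul_of_nonneg_left hC1le hx0.le
            _ = 4 * (M * (y - x) * (x * y)) := by ring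
        have t2 : x * C2 ≤ M * (y - x) * (x * y) := by
          calc x * C2 ≤ x * (M * y * (y - x)) := mul_le_mul_of_nonneg_left hC2le hx0.le
            _ = M * (y - x) * (x * y) := by ring
        have hMyx : 0 ≤ 2 * (M * (y - x) * x) :=
          mul_nonneg (by norm_num) (mul_nonneg (mul_nonneg hM (by linarith)) hx0.le)
        have t3 : (y - x) * A ≤ 2 * (M * (y - x) * (x * y)) := by
          calc (y - x) * A ≤ (y - x) * (M * (2*x) * (2*x - x)) :=
                mul_le_mul_of_nonneg_left hAle (sub_nonneg.mpr hxy)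
            _ = 2 * (M * (y - x) * x) * x := by ring
            _ ≤ 2 * (M * (y - x) * x) * y := mul_le_mul_of_nonneg_left hxy hMyx
            _ = 2 * (M * (y - x) * (x * y)) := by ring
        have hub : x * B - y * A ≤ 16 * M * (y - x) * (x * y) := by
          have hxC2 : 0 ≤ x * C2 := mul_nonneg hx0.le hC2nn
          have hyxA : 0 ≤ (y - x) * A := mul_nonneg (sub_nonneg.mpr hxy) hAnn
          linarith [e1, t1, hMxy, hxC2, hyxA]
        have hlb : -(16 * M * (y - x) * (x * y)) ≤ x * B - y * A := by
          have hxC1 : 0 ≤ x * C1 := mul_nonneg hx0.le hC1nn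
          linarith [e1, t2, t3, hMxy, hxC1]
        exact abs_le.mpr ⟨hlb, hub⟩
      · have h1 := hphi1le x hx0 (by linarith)
        have h2 := hphi1le y hy0 hyb
        have h3 := hphi1nn x hx0
        have h4 := hphi1nn y hy0
        rw [abs_le]
        constructor
        · nlinarith [mul_nonneg hM hy0.le, mul_nonneg hM (show (0:ℝ) ≤ y - 2*x by linarith)]
        · nlinarith [mul_nonneg hM hy0.le, mul_nonneg hM (show (0:ℝ) ≤ y - 2*x by linarith)]
  refine ⟨Real.toNNReal (16*M), LipschitzOnWith.of_dist_le_mul ?_⟩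
  intro p hp q hq
  rw [Real.dist_eq, Real.dist_eq, Real.coe_toNNReal _ (by positivity)]
  rcases le_total p q with h | h
  · have h1 := key p q hp.1 h hq.2
    rw [abs_sub_comm (phi1 f p)]
    refine h1.trans (le_of_eq ?_)
    rw [abs_sub_comm p q, abs_of_nonneg (by linarith)]
  · have h1 := key q p hq.1 h hp.2
    refine h1.trans (le_of_eq ?_)
    rw [abs_of_nonneg (by linarith)]
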